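/- arXiv:1207.1262 — 3 statements merged into one kernel-verified Lean document; each statement's English description precedes it below -/
import Mathlib

section
/- Dyson's constant term identity for n = 3: for every nonnegative integer k, the constant term of ∏_{1 ≤ i < j ≤ 3} (1 - x_i/x_j)^k (1 - x_j/x_i)^k equals (3k)!/(k!)³. -/
open Finsupp


noncomputable section DysonAux

def MM (n j : ℚ) : ℚ :=
  (-116 + 207*j - 147*j^2 + 48*j^3 - 6*j^4)
  + n*(-784 + 1113*j - 594*j^2 + 132*j^3 - 9*j^4)
  + n^2*(-2084 + 2214*j - 792*j^2 + 90*j^3)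
  + n^3*(-2728 + 1932*j - 348*j^2)
  + n^4*(-1760 + 624*j)
  + n^5*(-448)

def GG (n j : ℕ) : ℚ :=
  if j = 0 then 0 else
    (-1:ℚ)^j * ((Nat.choose (2*n) (j-1) : ℚ))^3 * MM n j / (2*((2*n:ℚ)+2-j)^3)

def hh (n j : ℕ) : ℚ :=
  ((n:ℚ)+1)^2 * (-1:ℚ)^j * ((Nat.choose (2*n+2) j : ℚ))^3
  + 3*(3*(n:ℚ)+1)*(3*(n:ℚ)+2) * (-1:ℚ)^j * ((Nat.choose (2*n) j : ℚ))^3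

lemma fact_ne (m : ℕ) : ((Nat.factorial m : ℚ)) ≠ 0 := by
  exact_mod_cast Nat.factorial_ne_zero m

set_option maxHeartbeats 3200000 in
lemma per_j (n j : ℕ) (h1 : 1 ≤ j) (h2 : j ≤ 2*n) :
    hh n j = GG n (j+1) - GG n j := by
  have hc : ((2*n - j : ℕ) : ℚ) = 2*(n:ℚ) - j := by
    rw [Nat.cast_sub h2]; push_cast; ring
  have e1 : ((Nat.choose (2*n+2) j : ℚ)) =
      ((2*n+2).factorial : ℚ) / ((j.factorial : ℚ) * (((2*n+2)-j).factorial : ℚ)) :=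
    Nat.cast_choose ℚ (by omega)
  have e2 : ((Nat.choose (2*n) j : ℚ)) =
      ((2*n).factorial : ℚ) / ((j.factorial : ℚ) * (((2*n)-j).factorial : ℚ)) :=
    Nat.cast_choose ℚ (by omega)
  have e3 : ((Nat.choose (2*n) (j-1) : ℚ)) =
      ((2*n).factorial : ℚ) / (((j-1).factorial : ℚ) * (((2*n)-(j-1)).factorial : ℚ)) :=
    Nat.cast_choose ℚ (by omega)
  have f1 : ((2*n+2).factorial : ℚ) = ((2*n:ℚ)+2)*((2*n:ℚ)+1)*((2*n).factorial : ℚ) := by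
    have h : (2*n+2) = (2*n+1)+1 := by omega
    rw [h, Nat.factorial_succ, Nat.factorial_succ]; push_cast; ring
  have f2 : (((2*n+2)-j).factorial : ℚ)
      = ((2*n:ℚ)+2-j)*((2*n:ℚ)+1-j)*(((2*n)-j).factorial : ℚ) := by
    have h : (2*n+2:ℕ) - j = (2*n - j) + 2 := by omega
    rw [h, Nat.factorial_succ, Nat.factorial_succ]; push_cast [hc]; ring
  have f3 : ((j).factorial : ℚ) = (j:ℚ) * ((j-1).factorial : ℚ) := by
    rw [← Nat.mul_factorial_pred (by omega : j ≠ 0)]; push_cast; ring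
  have f4 : (((2*n) - (j-1)).factorial : ℚ)
      = ((2*n:ℚ)+1-j)*(((2*n)-j).factorial : ℚ) := by
    have h : (2*n:ℕ) - (j-1) = (2*n - j) + 1 := by omega
    rw [h, Nat.factorial_succ]; push_cast [hc]; ring
  have hj1 : j - 1 + 1 = j := by omega
  have hA : ((2*n).factorial : ℚ) ≠ 0 := fact_ne _
  have hBm : (((j-1)).factorial : ℚ) ≠ 0 := fact_ne _
  have hCc : (((2*n)-j).factorial : ℚ) ≠ 0 := fact_ne _
  have hjQ : (j:ℚ) ≠ 0 := by positivity
  have d1 : ((2*n:ℚ)+1-j) ≠ 0 := by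
    have : (j:ℚ) ≤ 2*n := by exact_mod_cast h2
    intro h; nlinarith
  have d2 : ((2*n:ℚ)+2-j) ≠ 0 := by
    have : (j:ℚ) ≤ 2*n := by exact_mod_cast h2
    intro h; nlinarith
  have hm1 : (-1:ℚ)^(j+1) = -(-1:ℚ)^j := by ring
  rw [hh, GG, GG, if_neg (by omega : ¬ j+1 = 0), if_neg (by omega : ¬ j = 0)]
  simp only [Nat.add_sub_cancel]
  rw [e1, e2, e3, f1, f2, f3, f4, hm1]
  simp only [MM]
  push_cast
  have d1' : 2*(n:ℚ) + 2 - ((j:ℚ)+1) ≠ 0 := by intro h; apply d1; linarith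
  rw [show (2*(n:ℚ)+2-((j:ℚ)+1)) = 2*n+1-j by ring]
  generalize ((2*n).factorial : ℚ) = A at *
  generalize (((j-1)).factorial : ℚ) = B at *
  generalize (((2*n)-j).factorial : ℚ) = C at *
  generalize hX : (2*(n:ℚ)+2-j) = X at *
  generalize hY : (2*(n:ℚ)+1-j) = Y at *
  have hjx : (j:ℚ) = 2*n+2-X := by linarith
  have hY' : Y = X - 1 := by linarith
  subst hY'
  field_simp
  rw [hjx]
  ring

lemma per0 (n : ℕ) : hh n 0 = GG n 1 - GG n 0 := by
  have d : ((2*n:ℚ)+1) ≠ 0 := by positivity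
  rw [hh, GG, GG, if_neg one_ne_zero, if_pos rfl]
  simp only [Nat.sub_self, Nat.choose_zero_right, MM, pow_zero, Nat.cast_one]
  push_cast
  rw [show (2*(n:ℚ)+2-1) = 2*(n:ℚ)+1 from by ring]
  field_simp
  ring

def SS (n : ℕ) : ℚ := ∑ j ∈ Finset.range (2*n+1), (-1:ℚ)^j * ((Nat.choose (2*n) j : ℚ))^3

lemma recurrence (n : ℕ) :
    ((n:ℚ)+1)^2 * SS (n+1) + 3*(3*(n:ℚ)+1)*(3*(n:ℚ)+2) * SS n = 0 := by
  have key : ∑ j ∈ Finset.range (2*n+3), hh n j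
      = ((n:ℚ)+1)^2 * SS (n+1) + 3*(3*(n:ℚ)+1)*(3*(n:ℚ)+2) * SS n := by
    unfold hh SS
    have h1 : 2*(n+1) = 2*n+2 := by omega
    have h2 : 2*n+2+1 = 2*n+3 := by omega
    rw [Finset.sum_add_distrib, h1, h2]
    congr 1
    · rw [Finset.mul_sum]
      exact Finset.sum_congr rfl (fun j _ => by ring)
    · rw [Finset.mul_sum, show 2*n+3 = (2*n+1)+1+1 from by omega,
        Finset.sum_range_succ, Finset.sum_range_succ,
        Nat.choose_eq_zero_of_lt (by omega : 2*n < 2*n+1),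
        Nat.choose_eq_zero_of_lt (by omega : 2*n < 2*n+1+1)]
      simp only [Nat.cast_zero, zero_pow, mul_zero, add_zero, ne_eq, OfNat.ofNat_ne_zero,
        not_false_eq_true]
      exact Finset.sum_congr rfl (fun j _ => by ring)
  have key2 : ∑ j ∈ Finset.range (2*n+3), hh n j = 0 := by
    have h2 : 2*n+3 = (2*n+1)+1+1 := rfl
    rw [h2, Finset.sum_range_succ, Finset.sum_range_succ]
    have tele : ∑ j ∈ Finset.range (2*n+1), hh n j = GG n (2*n+1) - GG n 0 := by
      rw [← Finset.sum_range_sub (fun j => GG n j) (2*n+1)]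
      apply Finset.sum_congr rfl
      intro j hj
      rcases Nat.eq_zero_or_pos j with h | h
      · subst h; exact per0 n
      · exact per_j n j h (by simpa using Nat.lt_succ_iff.mp (Finset.mem_range.mp hj))
    rw [tele]
    have g0 : GG n 0 = 0 := by rw [GG, if_pos rfl]
    have neg1 : (-1:ℚ)^(2*n+1) = -1 := by simp [pow_succ, pow_mul]
    have neg2 : (-1:ℚ)^(2*n+1+1) = 1 := by simp [pow_succ, pow_mul]
    have c1 : (2*n+2).choose (2*n+1) = 2*n+2 := by
      have : 2*n+2 = (2*n+1)+1 := rfl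
      rw [this, Nat.choose_succ_self_right]
    have c2 : (2*n).choose (2*n+1) = 0 := Nat.choose_eq_zero_of_lt (by omega)
    have c3 : (2*n+2).choose (2*n+1+1) = 1 := by
      have : 2*n+1+1 = 2*n+2 := rfl
      rw [this, Nat.choose_self]
    have c4 : (2*n).choose (2*n+1+1) = 0 := Nat.choose_eq_zero_of_lt (by omega)
    have c5 : (2*n).choose (2*n+1-1) = 1 := by simp [Nat.choose_self]
    rw [g0, hh, hh, GG, if_neg (by omega : ¬ 2*n+1 = 0), c1, c2, c3, c4, c5, neg1, neg2,
      MM]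
    push_cast
    have d : ((2*n:ℚ)+2-(2*(n:ℚ)+1)) = 1 := by ring
    rw [d]
    ring
  rw [← key, key2]

lemma dixonS (n : ℕ) :
    SS n = (-1:ℚ)^n * ((3*n).factorial : ℚ) / ((n.factorial : ℚ))^3 := by
  induction n with
  | zero => simp [SS]
  | succ n ih =>
    have hrec := recurrence n
    have hne : ((n:ℚ)+1)^2 ≠ 0 := by positivity
    have hS : SS (n+1) = -(3*(3*(n:ℚ)+1)*(3*(n:ℚ)+2) * SS n)/((n:ℚ)+1)^2 := by
      field_simp at hrec ⊢
      linarith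
    rw [hS, ih]
    have f1 : ((3*(n+1)).factorial : ℚ)
        = (3*(n:ℚ)+3)*(3*(n:ℚ)+2)*(3*(n:ℚ)+1)*((3*n).factorial : ℚ) := by
      have h : 3*(n+1) = ((3*n+2)+1) := by omega
      rw [h, Nat.factorial_succ]
      have h2 : 3*n+2 = (3*n+1)+1 := rfl
      rw [h2, Nat.factorial_succ, Nat.factorial_succ]
      push_cast; ring
    have f2 : (((n+1)).factorial : ℚ) = ((n:ℚ)+1)*((n.factorial):ℚ) := by
      rw [Nat.factorial_succ]; push_cast; ring
    rw [f1, f2]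
    have hfn : ((n.factorial : ℚ)) ≠ 0 := fact_ne n
    have hn1 : ((n:ℚ)+1) ≠ 0 := by positivity
    push_cast
    field_simp
    ring

abbrev Rng := AddMonoidAlgebra ℚ (Fin 3 →₀ ℤ)

lemma sing_neg (d : Fin 3 →₀ ℤ) :
    -AddMonoidAlgebra.single d (1:ℚ) = AddMonoidAlgebra.single d (-1:ℚ) := by
  exact (AddMonoidAlgebra.single_neg d 1).symm

lemma expand (d : Fin 3 →₀ ℤ) (m : ℕ) :
    (1 - AddMonoidAlgebra.single d (1:ℚ) : Rng)^m
      = ∑ i ∈ Finset.range (m+1),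
          AddMonoidAlgebra.single (i • d) ((-1:ℚ)^i * (m.choose i : ℚ)) := by
  have h : (1 : Rng) - AddMonoidAlgebra.single d (1:ℚ)
      = AddMonoidAlgebra.single d (-1:ℚ) + 1 := by
    rw [← sing_neg]; ring
  rw [h, add_pow]
  apply Finset.sum_congr rfl
  intro i _
  rw [one_pow, mul_one, AddMonoidAlgebra.single_pow,
    ← map_natCast (AddMonoidAlgebra.singleZeroRingHom (R := ℚ) (M := Fin 3 →₀ ℤ)) (m.choose i)]
  show AddMonoidAlgebra.single _ _ * AddMonoidAlgebra.single _ _ = _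
  rw [AddMonoidAlgebra.single_mul_single, add_zero]

lemma sing_mul (a b : Fin 3 →₀ ℤ) :
    (AddMonoidAlgebra.single a (1:ℚ) : Rng) * AddMonoidAlgebra.single b 1
      = AddMonoidAlgebra.single (a+b) 1 := by
  rw [AddMonoidAlgebra.single_mul_single, one_mul]

lemma sing_zero_eq_one : (AddMonoidAlgebra.single (0 : Fin 3 →₀ ℤ) (1:ℚ) : Rng) = 1 :=
  AddMonoidAlgebra.one_def.symm

lemma pair_mul (d : Fin 3 →₀ ℤ) :
    ((1 : Rng) - AddMonoidAlgebra.single d 1) * (1 - AddMonoidAlgebra.single (-d) 1)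
      = -AddMonoidAlgebra.single (-d) 1 * (1 - AddMonoidAlgebra.single d 1)^2 := by
  have h : (AddMonoidAlgebra.single d (1:ℚ) : Rng) * AddMonoidAlgebra.single (-d) 1 = 1 := by
    rw [sing_mul, add_neg_cancel, sing_zero_eq_one]
  linear_combination (AddMonoidAlgebra.single d (1:ℚ) - 1) * h

lemma pair_pow (d : Fin 3 →₀ ℤ) (k : ℕ) :
    ((1 : Rng) - AddMonoidAlgebra.single d 1)^k * (1 - AddMonoidAlgebra.single (-d) 1)^k
      = AddMonoidAlgebra.single (k • (-d)) ((-1:ℚ)^k) * (1 - AddMonoidAlgebra.single d 1)^(2*k) := by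
  rw [← mul_pow, pair_mul, mul_pow, ← pow_mul]
  congr 1
  rw [neg_pow, AddMonoidAlgebra.single_pow, one_pow]
  rw [show ((-1:Rng)) = AddMonoidAlgebra.single (0 : Fin 3 →₀ ℤ) (-1:ℚ) from by
    rw [← sing_neg, sing_zero_eq_one]]
  rw [AddMonoidAlgebra.single_pow, AddMonoidAlgebra.single_mul_single, smul_zero, zero_add]
  simp

lemma rng_sum_apply {ι : Type*} (s : Finset ι) (f : ι → Rng) (a : Fin 3 →₀ ℤ) :
    (∑ i ∈ s, f i).coeff a = ∑ i ∈ s, (f i).coeff a := by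
  rw [AddMonoidAlgebra.coeff_sum, Finsupp.finset_sum_apply]

lemma rng_single_apply (a x : Fin 3 →₀ ℤ) (b : ℚ) :
    (AddMonoidAlgebra.single a b : Rng).coeff x = if a = x then b else 0 :=
  Finsupp.single_apply

/-- Dyson's constant term identity for `n = 3`: the constant term (coefficient of
`x₁⁰x₂⁰x₃⁰`) of `∏_{1 ≤ i < j ≤ 3} (1 - x_i/x_j)^k (1 - x_j/x_i)^k` equals `(3k)!/(k!)³`. -/
theorem dyson_constant_term_n_eq_three (k : ℕ) :
    (AddMonoidAlgebra.coeff (∏ p ∈ Finset.univ.filter (fun p : Fin 3 × Fin 3 => p.1 < p.2),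
        ((1 - AddMonoidAlgebra.single
              (Finsupp.single p.1 (1 : ℤ) - Finsupp.single p.2 (1 : ℤ)) (1 : ℚ)) ^ k *
         (1 - AddMonoidAlgebra.single
              (Finsupp.single p.2 (1 : ℤ) - Finsupp.single p.1 (1 : ℤ)) (1 : ℚ)) ^ k) :
        AddMonoidAlgebra ℚ (Fin 3 →₀ ℤ))) 0 =
      (Nat.factorial (3 * k) : ℚ) / ((Nat.factorial k : ℚ)) ^ 3 := by

  have hset : (Finset.univ.filter (fun p : Fin 3 × Fin 3 => p.1 < p.2))
      = {((0:Fin 3),(1:Fin 3)), (0,2), (1,2)} := by decide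
  rw [hset, Finset.prod_insert (by decide), Finset.prod_insert (by decide),
    Finset.prod_singleton]
  set d1 : Fin 3 →₀ ℤ := Finsupp.single 0 1 - Finsupp.single 1 1 with hd1
  set d2 : Fin 3 →₀ ℤ := Finsupp.single 0 1 - Finsupp.single 2 1 with hd2
  set d3 : Fin 3 →₀ ℤ := Finsupp.single 1 1 - Finsupp.single 2 1 with hd3
  have hn1 : Finsupp.single (1:Fin 3) (1:ℤ) - Finsupp.single 0 1 = -d1 := by rw [hd1]; abel
  have hn2 : Finsupp.single (2:Fin 3) (1:ℤ) - Finsupp.single 0 1 = -d2 := by rw [hd2]; abel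
  have hn3 : Finsupp.single (2:Fin 3) (1:ℤ) - Finsupp.single 1 1 = -d3 := by rw [hd3]; abel
  rw [hn1, hn2, hn3, pair_pow, pair_pow, pair_pow]
  have hre : ∀ s1 s2 s3 A1 A2 A3 : Rng,
      (s1 * A1) * ((s2 * A2) * (s3 * A3)) = (s1 * (s2 * s3)) * (A1 * (A2 * A3)) := by
    intros; ring
  rw [hre, AddMonoidAlgebra.single_mul_single, AddMonoidAlgebra.single_mul_single]
  have hc3 : ((-1:ℚ)^k) * (((-1:ℚ)^k) * ((-1:ℚ)^k)) = (-1:ℚ)^k := by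
    rcases Nat.even_or_odd k with h|h
    · rw [h.neg_one_pow]; norm_num
    · rw [h.neg_one_pow]; norm_num
  rw [hc3]
  rw [AddMonoidAlgebra.coeff_single_mul_apply]
  rw [expand d1 (2*k), expand d2 (2*k), expand d3 (2*k)]
  simp only [Finset.sum_mul, Finset.mul_sum, AddMonoidAlgebra.single_mul_single,
    rng_sum_apply, rng_single_apply]
  have hiff : ∀ x x1 i : ℕ,
      (i • d1 + (x1 • d2 + x • d3) = -(k • -d1 + (k • -d2 + k • -d3)) + 0)
        ↔ (i = x ∧ x1 + x = 2*k) := by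
    intro x x1 i
    rw [add_zero]
    constructor
    · intro h
      have h0 := DFunLike.congr_fun h 0
      have h1 := DFunLike.congr_fun h 1
      have h2 := DFunLike.congr_fun h 2
      simp [hd1, hd2, hd3, Finsupp.single_apply] at h0 h1 h2
      omega
    · rintro ⟨rfl, hsum⟩
      ext t
      fin_cases t <;>
        simp [hd1, hd2, hd3, Finsupp.single_apply] <;> omega
  simp only [hiff, ite_and]
  simp only [← Finset.mul_sum]
  have hS : (∑ x ∈ Finset.range (2*k+1), ∑ x1 ∈ Finset.range (2*k+1),
      ∑ x2 ∈ Finset.range (2*k+1),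
        if x2 = x then
          if x1 + x = 2*k then
            (-1:ℚ)^x2 * ((2*k).choose x2 : ℚ) *
              ((-1:ℚ)^x1 * ((2*k).choose x1 : ℚ) * ((-1:ℚ)^x * ((2*k).choose x : ℚ)))
          else 0
        else 0)
      = ∑ j ∈ Finset.range (2*k+1), (-1:ℚ)^j * (((2*k).choose j : ℚ))^3 := by
    apply Finset.sum_congr rfl
    intro x hx
    have hx' : x ≤ 2*k := by
      have := Finset.mem_range.mp hx; omega
    simp only [Finset.sum_ite_eq', hx, if_true]
    have hcond2 : ∀ x1 : ℕ, (x1 + x = 2*k) ↔ (x1 = 2*k - x) := fun x1 => by omega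
    simp only [hcond2]
    rw [Finset.sum_ite_eq', if_pos (Finset.mem_range.mpr (by omega))]
    rw [Nat.choose_symm hx']
    have hs1 : (-1:ℚ)^(2*k-x) * (-1:ℚ)^x = 1 := by
      rw [← pow_add, show 2*k-x+x = 2*k from by omega, pow_mul]; norm_num
    linear_combination ((-1:ℚ)^x * (((2*k).choose x : ℚ))^3) * hs1
  rw [hS, show (∑ j ∈ Finset.range (2*k+1), (-1:ℚ)^j * (((2*k).choose j : ℚ))^3) = SS k from rfl,
    dixonS k]
  have hsq : (-1:ℚ)^k * (-1:ℚ)^k = 1 := by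
    rw [← pow_add, ← two_mul, pow_mul]; norm_num
  linear_combination (((3*k).factorial : ℚ)/((k.factorial : ℚ))^3) * hsq
end DysonAux
end

section
/- Dyson's integral evaluation for n = 2: for every real γ > 0, (1/(2π)²) ∫_{-π}^{π} ∫_{-π}^{π} |e^{iθ₁} - e^{iθ₂}|^{2γ} dθ₁ dθ₂ = Γ(1 + 2γ) / Γ(1 + γ)². -/
open Real MeasureTheory
open Set intervalIntegral


lemma exp_I_sub_exp_I (a b : ℝ) :
    ‖Complex.exp (a * Complex.I) - Complex.exp (b * Complex.I)‖ =
      2 * |Real.sin ((a - b) / 2)| := by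
  have key : Complex.exp (a * Complex.I) - Complex.exp (b * Complex.I) =
      Complex.exp (((a + b) / 2 : ℝ) * Complex.I) *
        (2 * Complex.I * Complex.sin (((a - b) / 2 : ℝ))) := by
    rw [Complex.sin]
    rw [show ((((a - b) / 2 : ℝ) : ℂ) * Complex.I) = ((a:ℂ) - b)/2 * Complex.I by push_cast; ring]
    rw [show (-(((a - b) / 2 : ℝ) : ℂ) * Complex.I) = -(((a:ℂ) - b)/2 * Complex.I) by push_cast; ring]
    have e1 : (a:ℂ) * Complex.I = ((a + b)/2 : ℝ) * Complex.I + ((a:ℂ) - b)/2 * Complex.I := by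
      push_cast; ring
    have e2 : (b:ℂ) * Complex.I = ((a + b)/2 : ℝ) * Complex.I + -(((a:ℂ) - b)/2 * Complex.I) := by
      push_cast; ring
    rw [e1, e2, Complex.exp_add, Complex.exp_add]
    ring_nf
    rw [Complex.I_sq]
    ring
  rw [key, norm_mul, Complex.norm_exp_ofReal_mul_I, one_mul, norm_mul, norm_mul,
    Complex.norm_two, Complex.norm_I, ← Complex.ofReal_sin, Complex.norm_real, Real.norm_eq_abs, mul_one]


lemma real_beta (γ : ℝ) (hγ : 0 < γ) :
    Real.Gamma (γ + 1/2) * Real.Gamma (1/2) =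
      Real.Gamma (γ + 1) *
        ∫ x in (0:ℝ)..1, x ^ (γ - 1/2) * (1 - x) ^ (-(1/2) : ℝ) := by
  have hs : 0 < Complex.re ((γ:ℂ) + 1/2) := by simp; linarith
  have ht : 0 < Complex.re (1/2 : ℂ) := by norm_num
  have key := Complex.Gamma_mul_Gamma_eq_betaIntegral hs ht
  have hbeta : Complex.betaIntegral ((γ:ℂ) + 1/2) (1/2) =
      ((∫ x in (0:ℝ)..1, x ^ (γ - 1/2) * (1 - x) ^ (-(1/2):ℝ) : ℝ) : ℂ) := by
    rw [Complex.betaIntegral, ← intervalIntegral.integral_ofReal]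
    refine intervalIntegral.integral_congr fun x hx => ?_
    rw [Set.uIcc_of_le (by norm_num : (0:ℝ) ≤ 1)] at hx
    rw [Complex.ofReal_mul, Complex.ofReal_cpow hx.1 (γ - 1/2),
      Complex.ofReal_cpow (by linarith [hx.2] : (0:ℝ) ≤ 1 - x) (-(1/2))]
    push_cast
    rw [show ((γ:ℂ) + 1/2 - 1) = (γ:ℂ) - 1/2 by ring,
      show ((1:ℂ)/2 - 1) = -(1/2) by ring]
  rw [hbeta] at key
  have h3 : ((γ:ℂ) + 1/2 + 1/2) = ((γ + 1 : ℝ) : ℂ) := by push_cast; ring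
  have h1 : ((γ:ℂ) + 1/2) = ((γ + 1/2 : ℝ) : ℂ) := by push_cast; ring
  rw [h3, h1] at key
  rw [show (Complex.Gamma (1/2 : ℂ)) = Complex.Gamma ((1/2 : ℝ) : ℂ) by norm_num] at key
  rw [Complex.Gamma_ofReal, Complex.Gamma_ofReal, Complex.Gamma_ofReal] at key
  exact_mod_cast key


lemma gbeta_integrable (γ : ℝ) (hγ : 0 < γ) :
    IntegrableOn (fun t : ℝ => t ^ (γ - 1/2) * (1 - t) ^ (-(1/2) : ℝ)) (Icc 0 1) := by
  have h1 : IntervalIntegrable (fun t : ℝ => t ^ (γ - 1/2) * (1 - t) ^ (-(1/2) : ℝ))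
      volume 0 (1/2) := by
    refine (intervalIntegrable_rpow' (by linarith : (-1:ℝ) < γ - 1/2)).mul_continuousOn ?_
    refine ContinuousOn.rpow_const (by fun_prop) fun x hx => Or.inl ?_
    rw [uIcc_of_le (by norm_num : (0:ℝ) ≤ 1/2)] at hx
    have := hx.2
    intro h
    have : x = 1 := by linarith [sub_eq_zero.mp h]
    linarith [this ▸ hx.2]
  have h2 : IntervalIntegrable (fun t : ℝ => t ^ (γ - 1/2) * (1 - t) ^ (-(1/2) : ℝ))
      volume (1/2) 1 := by
    have base : IntervalIntegrable (fun x : ℝ => x ^ (-(1/2) : ℝ)) volume 0 (1/2) :=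
      intervalIntegrable_rpow' (by norm_num)
    have comp := base.comp_sub_left 1
    norm_num at comp
    have : IntervalIntegrable (fun t : ℝ => (1 - t) ^ (-(1/2) : ℝ) * t ^ (γ - 1/2))
        volume (1/2) 1 := by
      refine comp.symm.mul_continuousOn ?_
      refine ContinuousOn.rpow_const (by fun_prop) fun x hx => Or.inl ?_
      rw [uIcc_of_le (by norm_num : (1:ℝ)/2 ≤ 1)] at hx
      have := hx.1; positivity
    simpa [mul_comm] using this
  have := ((intervalIntegrable_iff_integrableOn_Icc_of_le (by norm_num : (0:ℝ) ≤ 1/2)).mp h1).union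
    ((intervalIntegrable_iff_integrableOn_Icc_of_le (by norm_num : (1:ℝ)/2 ≤ 1)).mp h2)
  rwa [Set.Icc_union_Icc_eq_Icc (by norm_num) (by norm_num)] at this

lemma sin_rpow_integral (γ : ℝ) (hγ : 0 < γ) :
    ∫ u in (0:ℝ)..(π/2), 2 * Real.sin u ^ (2*γ) =
      ∫ x in (0:ℝ)..1, x ^ (γ - 1/2) * (1 - x) ^ (-(1/2) : ℝ) := by
  set g : ℝ → ℝ := fun t => t ^ (γ - 1/2) * (1 - t) ^ (-(1/2) : ℝ) with hg
  set f : ℝ → ℝ := fun x => Real.sin x ^ 2 with hf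
  set f' : ℝ → ℝ := fun x => 2 * Real.sin x * Real.cos x with hf'
  have hπ : (0:ℝ) < π / 2 := by positivity
  have hmin : min (0:ℝ) (π/2) = 0 := min_eq_left hπ.le
  have hmax : max (0:ℝ) (π/2) = π/2 := max_eq_right hπ.le
  -- key pointwise identity on the open interval
  have hpt : ∀ x ∈ Ioo (0:ℝ) (π/2), f' x • (g ∘ f) x = 2 * Real.sin x ^ (2*γ) := by
    intro x hx
    have hs : 0 < Real.sin x := Real.sin_pos_of_pos_of_lt_pi hx.1 (by linarith [hx.2, pi_pos])
    have hc : 0 < Real.cos x := Real.cos_pos_of_mem_Ioo ⟨by linarith [hx.1, pi_pos], hx.2⟩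
    have e1 : (Real.sin x ^ 2 : ℝ) ^ (γ - 1/2) = Real.sin x ^ (2 * (γ - 1/2)) := by
      rw [← Real.rpow_natCast (Real.sin x) 2, ← Real.rpow_mul hs.le]
      norm_num [mul_comm]
    have e2 : ((1 : ℝ) - Real.sin x ^ 2) ^ (-(1/2) : ℝ) = (Real.cos x)⁻¹ := by
      rw [← Real.cos_sq' x, ← Real.rpow_natCast (Real.cos x) 2, ← Real.rpow_mul hc.le]
      norm_num [Real.rpow_neg_one]
    simp only [Function.comp, hf, hf', hg, smul_eq_mul]
    rw [e1, e2]
    have : Real.sin x ^ (2 * (γ - 1/2)) * Real.sin x = Real.sin x ^ (2*γ) := by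
      rw [← Real.rpow_add_one hs.ne' (2 * (γ - 1/2))]
      ring_nf
    rw [show 2 * Real.sin x * Real.cos x * (Real.sin x ^ (2 * (γ - 1/2)) * (Real.cos x)⁻¹) =
      2 * (Real.sin x ^ (2 * (γ - 1/2)) * Real.sin x) * (Real.cos x * (Real.cos x)⁻¹) by ring,
      mul_inv_cancel₀ hc.ne', mul_one, this]
  have haeg : ∀ᵐ (x:ℝ) ∂volume, x ∈ Set.uIoc (0:ℝ) (π/2) →
      2 * Real.sin x ^ (2*γ) = f' x • (g ∘ f) x := by
    have h0 : ∀ᵐ (x:ℝ) ∂volume, x ≠ π/2 := by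
      rw [ae_iff]
      have : {x : ℝ | ¬ x ≠ π/2} = {π/2} := by ext y; simp
      rw [this]
      exact measure_singleton _
    filter_upwards [h0] with x hne hmem
    rw [Set.uIoc_of_le hπ.le] at hmem
    exact (hpt x ⟨hmem.1, lt_of_le_of_ne hmem.2 hne⟩).symm
  have hcont2 : Continuous (fun x : ℝ => 2 * Real.sin x ^ (2*γ)) := by
    refine continuous_const.mul (Continuous.rpow_const Real.continuous_sin fun x => Or.inr (by positivity))
  have key : (∫ x in (0:ℝ)..(π/2), f' x • (g ∘ f) x) = ∫ u in (f 0)..(f (π/2)), g u := by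
    apply intervalIntegral.integral_comp_smul_deriv''' (by fun_prop)
    · intro x hx
      rw [hmin, hmax] at hx
      have : HasDerivAt f (f' x) x := by
        simpa [hf', mul_comm, mul_assoc, pow_one] using (Real.hasDerivAt_sin x).fun_pow 2
      exact this.hasDerivWithinAt
    · -- continuity of g on image of open interval
      rw [hmin, hmax]
      refine ContinuousOn.mono (s := Ioo 0 1) ?_ ?_
      · intro t ht
        refine ContinuousWithinAt.mul ?_ ?_
        · exact ((Real.continuousAt_rpow_const t _ (Or.inl ht.1.ne')).continuousWithinAt)
        · exact ((Real.continuousAt_rpow_const (1-t) _ (Or.inl (by linarith [ht.2]))).comp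
            (by fun_prop)).continuousWithinAt
      · rintro _ ⟨x, hx, rfl⟩
        have hs : 0 < Real.sin x := Real.sin_pos_of_pos_of_lt_pi hx.1 (by linarith [hx.2, pi_pos])
        have hc : 0 < Real.cos x := Real.cos_pos_of_mem_Ioo ⟨by linarith [hx.1, pi_pos], hx.2⟩
        simp only [hf]
        constructor
        · positivity
        · nlinarith [Real.sin_sq_add_cos_sq x]
    · -- integrability of g on image
      refine (gbeta_integrable γ hγ).mono_set ?_
      rintro _ ⟨x, hx, rfl⟩
      simp only [hf]
      constructor
      · positivity
      · nlinarith [Real.sin_le_one x, Real.neg_one_le_sin x]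
    · -- integrability of the composed integrand
      rw [← intervalIntegrable_iff']
      have hcont : IntervalIntegrable (fun x : ℝ => 2 * Real.sin x ^ (2*γ)) volume 0 (π/2) :=
        hcont2.intervalIntegrable 0 (π/2)
      refine IntervalIntegrable.congr_ae hcont ?_
      have h1 : ∀ᵐ x ∂(volume.restrict (Set.uIoc (0:ℝ) (π/2))), x ∈ Set.uIoc (0:ℝ) (π/2) :=
        ae_restrict_mem measurableSet_uIoc
      filter_upwards [ae_restrict_of_ae haeg, h1] with x hx hmem
      exact hx hmem
  have hfv : f 0 = 0 := by simp [hf]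
  have hfv2 : f (π/2) = 1 := by simp [hf]
  rw [hfv, hfv2] at key
  rw [← key]
  exact intervalIntegral.integral_congr_ae haeg


lemma final_alg (γ : ℝ) (hγ : 0 < γ) (B : ℝ)
    (hB : Real.Gamma (γ + 1/2) * Real.Gamma (1/2) = Real.Gamma (γ + 1) * B) :
    (2:ℝ) ^ (2*γ) * B / π = Real.Gamma (1 + 2*γ) / Real.Gamma (1 + γ) ^ 2 := by
  have dup := Real.Gamma_mul_Gamma_add_half (γ + 1/2)
  rw [show γ + 1/2 + 1/2 = γ + 1 by ring, show 2*(γ + 1/2) = 2*γ + 1 by ring,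
    show 1 - (2*γ + 1) = -(2*γ) by ring] at dup
  rw [Real.Gamma_one_half_eq] at hB
  rw [show (1 + 2*γ) = 2*γ + 1 by ring, show (1 + γ) = γ + 1 by ring]
  have hs : Real.sqrt π * Real.sqrt π = π := Real.mul_self_sqrt pi_pos.le
  have hexp : (2:ℝ) ^ (2*γ) * (2:ℝ) ^ (-(2*γ)) = 1 := by
    rw [← Real.rpow_add (by norm_num : (0:ℝ) < 2)]
    simp
  have hΓ1 : 0 < Real.Gamma (γ + 1) := Real.Gamma_pos_of_pos (by linarith)
  rw [div_eq_div_iff pi_pos.ne' (by positivity : (0:ℝ) < Real.Gamma (γ+1)^2).ne']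
  linear_combination (-((2:ℝ)^(2*γ) * Real.Gamma (γ+1)))*hB +
    ((2:ℝ)^(2*γ) * Real.sqrt π)*dup +
    (Real.Gamma (2*γ+1) * (2:ℝ)^(-(2*γ)) * (2:ℝ)^(2*γ))*hs +
    (Real.Gamma (2*γ+1) * π)*hexp


/-- Dyson's integral evaluation for `n = 2`: for `γ > 0`,
`(1/(2π)²) ∫_{-π}^{π} ∫_{-π}^{π} |e^{iθ₁} - e^{iθ₂}|^{2γ} dθ₁ dθ₂ = Γ(1+2γ)/Γ(1+γ)²`. -/
theorem dyson_integral_n_eq_two (γ : ℝ) (hγ : 0 < γ) :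
    (1 / (2 * π) ^ 2) *
      ∫ θ₁ in (-π)..π, ∫ θ₂ in (-π)..π,
        ‖Complex.exp (θ₁ * Complex.I) - Complex.exp (θ₂ * Complex.I)‖ ^ (2 * γ) =
      Real.Gamma (1 + 2 * γ) / Real.Gamma (1 + γ) ^ 2 := by
  have hsin := sin_rpow_integral γ hγ
  have hbeta := real_beta γ hγ
  set B := ∫ x in (0:ℝ)..1, x ^ (γ - 1/2) * (1 - x) ^ (-(1/2) : ℝ) with hBdef
  set G : ℝ → ℝ := fun θ => (2 * |Real.sin (θ/2)|) ^ (2*γ) with hGdef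
  have hG_cont : Continuous G := by
    refine Continuous.rpow_const (by fun_prop) fun x => Or.inr (by positivity)
  have hper : Function.Periodic G (2*π) := by
    intro x
    simp only [hGdef]
    rw [show (x + 2*π)/2 = x/2 + π by ring, Real.sin_add_pi, abs_neg]
  have heven : ∀ x, G (-x) = G x := by
    intro x
    simp only [hGdef]
    rw [show (-x)/2 = -(x/2) by ring, Real.sin_neg, abs_neg]
  have hinner : ∀ θ₁ : ℝ, (∫ θ₂ in (-π)..π,
      ‖Complex.exp (θ₁ * Complex.I) - Complex.exp (θ₂ * Complex.I)‖ ^ (2 * γ)) =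
      ∫ θ in (-π)..π, G θ := by
    intro θ₁
    have step1 : (∫ θ₂ in (-π)..π,
        ‖Complex.exp (θ₁ * Complex.I) - Complex.exp (θ₂ * Complex.I)‖ ^ (2 * γ)) =
        ∫ θ₂ in (-π)..π, G (θ₁ - θ₂) := by
      refine intervalIntegral.integral_congr fun θ₂ _ => ?_
      rw [exp_I_sub_exp_I]
    rw [step1, intervalIntegral.integral_comp_sub_left G θ₁]
    have := hper.intervalIntegral_add_eq (θ₁ - π) (-π)
    rw [show θ₁ - π + 2*π = θ₁ + π by ring, show -π + 2*π = π by ring] at this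
    rw [show θ₁ - -π = θ₁ + π by ring]
    exact this
  rw [intervalIntegral.integral_congr (g := fun _ => ∫ θ in (-π)..π, G θ)
    (fun θ₁ _ => hinner θ₁), intervalIntegral.integral_const]
  have hsplit : (∫ θ in (-π)..π, G θ) = 2 * ∫ θ in (0:ℝ)..π, G θ := by
    have h1 : (∫ θ in (-π)..(0:ℝ), G θ) = ∫ θ in (0:ℝ)..π, G θ := by
      have h2 := intervalIntegral.integral_comp_neg (a := 0) (b := π) (f := G)
      rw [neg_zero] at h2
      rw [← h2]
      exact intervalIntegral.integral_congr fun x _ => heven x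
    rw [← intervalIntegral.integral_add_adjacent_intervals
      (hG_cont.intervalIntegrable (-π) 0) (hG_cont.intervalIntegrable 0 π), h1]
    ring
  have hhalf : (∫ θ in (0:ℝ)..π, G θ) = 2 * ∫ u in (0:ℝ)..(π/2), G (2*u) := by
    have := intervalIntegral.integral_comp_mul_left (a := 0) (b := π/2) G
      (by norm_num : (2:ℝ) ≠ 0)
    rw [mul_zero, show (2:ℝ) * (π/2) = π by ring] at this
    rw [this, smul_eq_mul]
    ring
  have hval : (∫ u in (0:ℝ)..(π/2), G (2*u)) = (2:ℝ)^(2*γ) * (B/2) := by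
    have hcongr : (∫ u in (0:ℝ)..(π/2), G (2*u)) =
        ∫ u in (0:ℝ)..(π/2), (2:ℝ)^(2*γ) / 2 * (2 * Real.sin u ^ (2*γ)) := by
      refine intervalIntegral.integral_congr fun u hu => ?_
      rw [Set.uIcc_of_le (by positivity : (0:ℝ) ≤ π/2)] at hu
      have hsn : 0 ≤ Real.sin u := Real.sin_nonneg_of_nonneg_of_le_pi hu.1
        (by linarith [hu.2, pi_pos])
      simp only [hGdef]
      rw [show (2*u)/2 = u by ring, abs_of_nonneg hsn,
        Real.mul_rpow (by norm_num : (0:ℝ) ≤ 2) hsn]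
      ring
    rw [hcongr, intervalIntegral.integral_const_mul, hsin]
    ring
  rw [hsplit, hhalf, hval, smul_eq_mul]
  have hfinal := final_alg γ hγ B hbeta
  rw [← hfinal]
  have hπ : (0:ℝ) < π := pi_pos
  field_simp
  ring
end

section
/- Mehta's integral for n = 2: for real γ > 0, (1/(2π)) ∫_{-∞}^{∞} ∫_{-∞}^{∞} e^{-t₁²/2} e^{-t₂²/2} |t₁ - t₂|^{2γ} dt₁ dt₂ = Γ(1+γ)Γ(1+2γ) / Γ(1+γ)². -/
open Real MeasureTheory

lemma integrable_abs_rpow_mul_exp_neg_mul_sq {b : ℝ} (hb : 0 < b) {s : ℝ} (hs : -1 < s) :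
    Integrable fun x : ℝ => |x| ^ s * Real.exp (-b * x ^ 2) := by
  have hIoi : IntegrableOn (fun x : ℝ => |x| ^ s * Real.exp (-b * x ^ 2)) (Set.Ioi 0) :=
    (integrableOn_rpow_mul_exp_neg_mul_sq hb hs).congr_fun
      (fun x hx => by rw [abs_of_pos hx]) measurableSet_Ioi
  rw [← integrableOn_univ, ← Set.Iio_union_Ici (a := (0:ℝ)), integrableOn_union,
    integrableOn_Ici_iff_integrableOn_Ioi]
  refine ⟨?_, hIoi⟩
  rw [← (Measure.measurePreserving_neg (volume : Measure ℝ)).integrableOn_comp_preimage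
      (Homeomorph.neg ℝ).measurableEmbedding]
  simpa [Function.comp_def, abs_neg, neg_sq] using hIoi

/-- Mehta's integral for `n = 2`: for `γ > 0`,
`(1/(2π)) ∫∫ e^{-t₁²/2} e^{-t₂²/2} |t₁-t₂|^{2γ} dt₁ dt₂ = Γ(1+γ)Γ(1+2γ)/Γ(1+γ)²`. -/
theorem mehta_integral_n_eq_two (γ : ℝ) (hγ : 0 < γ) :
    (1 / (2 * π)) *
      ∫ t₁ : ℝ, ∫ t₂ : ℝ,
        Real.exp (-t₁ ^ 2 / 2) * Real.exp (-t₂ ^ 2 / 2) * |t₁ - t₂| ^ (2 * γ) =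
      Real.Gamma (1 + γ) * Real.Gamma (1 + 2 * γ) / Real.Gamma (1 + γ) ^ 2 := by
  have h2γ : (0:ℝ) < 2 * γ := by linarith
  have hsπ : (0:ℝ) < Real.sqrt π := Real.sqrt_pos.mpr pi_pos
  set F : ℝ × ℝ → ℝ :=
    fun p => Real.exp (-p.1 ^ 2 / 2) * Real.exp (-p.2 ^ 2 / 2) * |p.1 - p.2| ^ (2 * γ) with hF
  -- 1D integrable pieces
  have hg : Integrable (fun t : ℝ => Real.exp (-t ^ 2 / 2)) := by
    have := integrable_exp_neg_mul_sq (b := (1:ℝ)/2) one_half_pos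
    refine this.congr (Filter.Eventually.of_forall fun t => ?_)
    ring_nf
  have hh : Integrable (fun t : ℝ => |t| ^ (2*γ) * Real.exp (-t ^ 2 / 2)) := by
    have := integrable_abs_rpow_mul_exp_neg_mul_sq (b := (1:ℝ)/2) one_half_pos
      (s := 2*γ) (by linarith)
    refine this.congr (Filter.Eventually.of_forall fun t => ?_)
    ring_nf
  -- continuity of F
  have hFc : Continuous F := by
    refine ((((continuous_fst.pow 2).neg.div_const 2).rexp.mul
      (((continuous_snd.pow 2).neg.div_const 2).rexp)).mul ?_)
    exact (continuous_fst.sub continuous_snd).abs.rpow_const (fun x => Or.inr h2γ.le)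
  -- integrability of F on ℝ × ℝ
  have hFi : Integrable F := by
    have hbound : Integrable (fun p : ℝ × ℝ => (2:ℝ) ^ (2*γ) *
        ((|p.1| ^ (2*γ) * Real.exp (-p.1 ^ 2 / 2)) * Real.exp (-p.2 ^ 2 / 2) +
          Real.exp (-p.1 ^ 2 / 2) * (|p.2| ^ (2*γ) * Real.exp (-p.2 ^ 2 / 2)))) := by
      rw [Measure.volume_eq_prod]
      exact ((hh.mul_prod hg).add (hg.mul_prod hh)).const_mul _
    refine hbound.mono' hFc.aestronglyMeasurable (Filter.Eventually.of_forall fun p => ?_)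
    have key : |p.1 - p.2| ^ (2*γ) ≤ (2:ℝ) ^ (2*γ) * (|p.1| ^ (2*γ) + |p.2| ^ (2*γ)) := by
      have h1 : |p.1 - p.2| ≤ 2 * max |p.1| |p.2| := by
        calc |p.1 - p.2| ≤ |p.1| + |p.2| := abs_sub p.1 p.2
        _ ≤ 2 * max |p.1| |p.2| := by
          rcases le_total |p.1| |p.2| with h | h <;> simp [max_eq_left, max_eq_right, h] <;> linarith
      calc |p.1 - p.2| ^ (2*γ) ≤ (2 * max |p.1| |p.2|) ^ (2*γ) :=
            Real.rpow_le_rpow (abs_nonneg _) h1 h2γ.le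
      _ = (2:ℝ) ^ (2*γ) * (max |p.1| |p.2|) ^ (2*γ) := by
          rw [Real.mul_rpow (by norm_num) (le_max_iff.mpr (Or.inl (abs_nonneg _)))]
      _ ≤ (2:ℝ) ^ (2*γ) * (|p.1| ^ (2*γ) + |p.2| ^ (2*γ)) := by
          gcongr
          rcases max_cases |p.1| |p.2| with ⟨h, _⟩ | ⟨h, _⟩ <;> rw [h]
          · nlinarith [Real.rpow_nonneg (abs_nonneg p.2) (2*γ)]
          · nlinarith [Real.rpow_nonneg (abs_nonneg p.1) (2*γ)]
    have hFnn : 0 ≤ F p := by positivity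
    rw [Real.norm_eq_abs, abs_of_nonneg hFnn]
    calc F p ≤ Real.exp (-p.1 ^ 2 / 2) * Real.exp (-p.2 ^ 2 / 2) *
          ((2:ℝ) ^ (2*γ) * (|p.1| ^ (2*γ) + |p.2| ^ (2*γ))) := by
          exact mul_le_mul_of_nonneg_left key (by positivity)
    _ = (2:ℝ) ^ (2*γ) *
        ((|p.1| ^ (2*γ) * Real.exp (-p.1 ^ 2 / 2)) * Real.exp (-p.2 ^ 2 / 2) +
          Real.exp (-p.1 ^ 2 / 2) * (|p.2| ^ (2*γ) * Real.exp (-p.2 ^ 2 / 2))) := by ring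
  -- Step 1: substitute t₂ = t₁ - s in the inner integral
  have stepA : ∀ t₁ : ℝ,
      (∫ t₂ : ℝ, Real.exp (-t₁ ^ 2 / 2) * Real.exp (-t₂ ^ 2 / 2) * |t₁ - t₂| ^ (2 * γ))
        = ∫ s : ℝ, F (t₁, t₁ - s) := by
    intro t₁
    have key : ∀ (k : ℝ → ℝ), (∫ s : ℝ, k (t₁ - s)) = ∫ s : ℝ, k s := by
      intro k
      have h1 : (∫ s : ℝ, k (t₁ - s)) = ∫ s : ℝ, (fun u => k (-u)) (s - t₁) := by
        congr 1; funext s; congr 1; ring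
      rw [h1, integral_sub_right_eq_self (μ := volume) (fun u => k (-u)) t₁,
        integral_neg_eq_self]
    exact (key (fun t₂ => Real.exp (-t₁ ^ 2 / 2) * Real.exp (-t₂ ^ 2 / 2)
      * |t₁ - t₂| ^ (2 * γ))).symm
  -- Step 2: Fubini swap
  have hshear : MeasurePreserving (fun z : ℝ × ℝ => (z.1, z.1 - z.2))
      ((volume : Measure ℝ).prod volume) ((volume : Measure ℝ).prod volume) := by
    have h1 : MeasurePreserving (fun z : ℝ × ℝ => (z.1, -z.2))
        ((volume : Measure ℝ).prod volume) ((volume : Measure ℝ).prod volume) :=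
      (MeasurePreserving.id volume).prod (Measure.measurePreserving_neg volume)
    have h2 := measurePreserving_prod_add_right (volume : Measure ℝ) volume
    have h3 := h2.comp h1
    convert h3 using 1
    funext z
    simp [Function.comp]
    ring
  have hHi : Integrable (Function.uncurry fun t s : ℝ => F (t, t - s))
      ((volume : Measure ℝ).prod volume) := by
    have hm : AEStronglyMeasurable F ((volume : Measure ℝ).prod volume) := by
      rw [← Measure.volume_eq_prod]; exact hFc.aestronglyMeasurable
    have := (hshear.integrable_comp hm).mpr (by rwa [← Measure.volume_eq_prod])
    exact this
  have swap : (∫ t₁ : ℝ, ∫ s : ℝ, F (t₁, t₁ - s)) = ∫ s : ℝ, ∫ t₁ : ℝ, F (t₁, t₁ - s) :=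
    integral_integral_swap hHi
  -- Step 3: the inner Gaussian integral, for fixed s
  have inner : ∀ s : ℝ, (∫ t : ℝ, F (t, t - s))
      = Real.sqrt π * (|s| ^ (2*γ) * Real.exp (-(1/4) * s ^ 2)) := by
    intro s
    have h1 : ∀ t : ℝ, F (t, t - s)
        = |s| ^ (2*γ) * Real.exp (-(1/4) * s ^ 2) * Real.exp (-(t - s/2) ^ 2) := by
      intro t
      simp only [hF]
      rw [show t - (t - s) = s by ring, ← Real.exp_add,
        show -t ^ 2 / 2 + -(t - s) ^ 2 / 2 = -(1/4) * s ^ 2 + -(t - s/2) ^ 2 by ring,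
        Real.exp_add]
      ring
    simp_rw [h1]
    rw [integral_const_mul, integral_sub_right_eq_self (μ := volume)
      (fun u : ℝ => Real.exp (-u ^ 2)) (s/2)]
    have hg1 : (∫ u : ℝ, Real.exp (-u ^ 2)) = Real.sqrt π := by
      have := integral_gaussian (1 : ℝ)
      simpa using this
    rw [hg1]; ring
  -- Step 4: the remaining one-dimensional Gamma-type integral
  have stepD : (∫ s : ℝ, Real.sqrt π * (|s| ^ (2*γ) * Real.exp (-(1/4) * s ^ 2)))
      = Real.sqrt π * (2 * (((1:ℝ)/4) ^ (-(2*γ+1)/2) * (1/2) * Real.Gamma ((2*γ+1)/2))) := by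
    rw [integral_const_mul]
    congr 1
    have habs : (∫ s : ℝ, |s| ^ (2*γ) * Real.exp (-(1/4) * s ^ 2))
        = ∫ s : ℝ, (fun x : ℝ => x ^ (2*γ) * Real.exp (-(1/4) * x ^ 2)) |s| := by
      congr 1; funext s; simp [sq_abs]
    rw [habs, integral_comp_abs (f := fun x : ℝ => x ^ (2*γ) * Real.exp (-(1/4) * x ^ 2))]
    congr 1
    have hpow : ∀ x : ℝ, x ^ (2:ℕ) = x ^ ((2:ℕ) : ℝ) := fun x => (Real.rpow_natCast x 2).symm
    have := integral_rpow_mul_exp_neg_mul_rpow (p := 2) (q := 2*γ) (b := 1/4)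
      two_pos (by linarith) (by norm_num)
    rw [show (∫ x in Set.Ioi (0:ℝ), x ^ (2*γ) * Real.exp (-(1/4) * x ^ 2))
        = ∫ x in Set.Ioi (0:ℝ), x ^ (2*γ) * Real.exp (-(1/4) * x ^ (2:ℝ)) by
      refine setIntegral_congr_fun measurableSet_Ioi fun x _ => ?_
      rw [show ((2:ℝ)) = ((2:ℕ):ℝ) by norm_num, ← hpow]]
    rw [this]
  -- put the integral together
  have main : (∫ t₁ : ℝ, ∫ t₂ : ℝ,
      Real.exp (-t₁ ^ 2 / 2) * Real.exp (-t₂ ^ 2 / 2) * |t₁ - t₂| ^ (2 * γ))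
      = Real.sqrt π * (2 * (((1:ℝ)/4) ^ (-(2*γ+1)/2) * (1/2) * Real.Gamma ((2*γ+1)/2))) := by
    calc (∫ t₁ : ℝ, ∫ t₂ : ℝ,
        Real.exp (-t₁ ^ 2 / 2) * Real.exp (-t₂ ^ 2 / 2) * |t₁ - t₂| ^ (2 * γ))
        = ∫ t₁ : ℝ, ∫ s : ℝ, F (t₁, t₁ - s) := by
          congr 1; funext t₁; exact stepA t₁
    _ = ∫ s : ℝ, ∫ t₁ : ℝ, F (t₁, t₁ - s) := swap
    _ = ∫ s : ℝ, Real.sqrt π * (|s| ^ (2*γ) * Real.exp (-(1/4) * s ^ 2)) := by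
          congr 1; funext s; exact inner s
    _ = _ := stepD
  rw [main]
  -- final Gamma arithmetic
  have hquarter : ((1:ℝ)/4) ^ (-(2*γ+1)/2) = (2:ℝ) ^ (2*γ+1) := by
    rw [show ((1:ℝ)/4) = (2:ℝ) ^ (-2 : ℝ) by
      rw [show (-2 : ℝ) = ((-2 : ℤ) : ℝ) by norm_num, Real.rpow_intCast]; norm_num]
    rw [← Real.rpow_mul (by norm_num : (0:ℝ) ≤ 2)]
    congr 1
    ring
  rw [hquarter, show (2*γ+1)/2 = γ + 1/2 by ring]
  have hb : (0:ℝ) < Real.Gamma (1 + γ) := Real.Gamma_pos_of_pos (by linarith)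
  have hP : (0:ℝ) < (2:ℝ) ^ (2*γ) := Real.rpow_pos_of_pos two_pos _
  have h2exp : (2:ℝ) ^ (2*γ+1) = (2:ℝ) ^ (2*γ) * 2 := by
    rw [Real.rpow_add two_pos, Real.rpow_one]
  have hdup := Real.Gamma_mul_Gamma_add_half (γ + 1/2)
  rw [show 1 - 2*(γ + 1/2) = -(2*γ) by ring, show γ + 1/2 + 1/2 = 1 + γ by ring,
    show 2*(γ + 1/2) = 1 + 2*γ by ring, Real.rpow_neg two_pos.le] at hdup
  have hdup' : Real.Gamma (γ + 1/2) * Real.Gamma (1 + γ) * (2:ℝ) ^ (2*γ)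
      = Real.Gamma (1 + 2*γ) * Real.sqrt π := by
    rw [hdup]; field_simp
  have hππ : Real.sqrt π * Real.sqrt π = π := Real.mul_self_sqrt pi_pos.le
  rw [pow_two, mul_div_mul_left _ _ hb.ne', eq_div_iff hb.ne', h2exp]
  have hπ : (π:ℝ) ≠ 0 := pi_ne_zero
  field_simp
  rw [show (2 * γ + 1) / 2 = γ + 1/2 by ring]
  linear_combination Real.sqrt π * hdup' + Real.Gamma (1 + 2*γ) * hππ
end
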